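/- Let ν be a σ-finite measure on a measurable space 𝒳, let h : 𝒳 → [0, ∞) and T : 𝒳 → ℝ^d be measurable, let W : ℝ^d → ℝ be twice continuously differentiable, and for θ ∈ ℝ^d write E_θ(x) := h(x)·exp(⟨θ, T(x)⟩ - W(θ)). Let Θ ⊆ ℝ^d be a convex set on which the family is normalized (∫ E_θ dν = 1 for every θ ∈ Θ), with P_θ the probability measure with ν-density E_θ. Suppose there are constants L > 0, λ > 0, β > 0 such that for every θ ∈ Θ: ‖∇W(θ)‖ ≤ L, ⟨v, ∇²W(θ) v⟩ ≤ λ‖v‖² for all v ∈ ℝ^d, and ∇W(θ) = ∫ T(x) dP_θ(x). Let θ₁, θ₂, θ* ∈ Θ, set m = (θ₁ + θ₂)/2, and assume the open Euclidean ball B(m, 1/(2β)) is contained in Θ and ‖θ₁ - θ*‖ < 1/(2β). Then for every t > 0, P_{θ*}[{x ∈ 𝒳 : E_{θ₁}(x) < t · E_{θ₂}(x)}] ≤ √t · exp( 2L‖θ₁ - θ*‖ + (λ/2)‖θ₁ - θ*‖² - ((W(θ₁) + W(θ₂))/2 - W(m)) ). -/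

import Mathlib

open MeasureTheory

lemma taylor_aux {d : ℕ} (W : EuclideanSpace ℝ (Fin d) → ℝ) (hW : ContDiff ℝ 2 W)
    (lam : ℝ) (m δ : EuclideanSpace ℝ (Fin d))
    (hq : ∀ s : ℝ, s ∈ Set.Icc (0:ℝ) 1 →
      iteratedFDeriv ℝ 2 W (m + s • δ) ![δ, δ] ≤ lam * ‖δ‖ ^ 2) :
    W (m + δ) ≤ W m + fderiv ℝ W m δ + lam / 2 * ‖δ‖ ^ 2 := by
  set F := fderiv ℝ W with hF
  have hFc : ContDiff ℝ 1 F := hW.fderiv_right (le_refl 2)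
  have hline : ∀ s : ℝ, HasDerivAt (fun s : ℝ => m + s • δ) δ s := by
    intro s
    simpa using ((hasDerivAt_id s).smul_const δ).const_add m
  set n : ℝ → ℝ := fun s => F (m + s • δ) δ with hn
  set q : ℝ → ℝ := fun s => fderiv ℝ F (m + s • δ) δ δ with hqdef
  have hg : ∀ s : ℝ, HasDerivAt (fun s : ℝ => W (m + s • δ)) (n s) s := by
    intro s
    exact ((hW.differentiable (by norm_num) (m + s • δ)).hasFDerivAt).comp_hasDerivAt s (hline s)
  have hnd : ∀ s : ℝ, HasDerivAt n (q s) s := by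
    intro s
    have h1 : HasFDerivAt (fun y => F y δ)
        ((F (m + s • δ)).comp (0 : EuclideanSpace ℝ (Fin d) →L[ℝ] EuclideanSpace ℝ (Fin d))
          + (fderiv ℝ F (m + s • δ)).flip δ) (m + s • δ) :=
      ((hFc.differentiable one_ne_zero (m + s • δ)).hasFDerivAt).clm_apply (hasFDerivAt_const δ _)
    have h2 := h1.comp_hasDerivAt s (hline s)
    exact h2.congr_deriv (by simp [hqdef])
  have hqb : ∀ s ∈ Set.Icc (0:ℝ) 1, q s ≤ lam * ‖δ‖ ^ 2 := by
    intro s hs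
    have := hq s hs
    rwa [iteratedFDeriv_two_apply] at this
  have hφd : ∀ s : ℝ, HasDerivAt (fun s => n s - lam * ‖δ‖ ^ 2 * s) (q s - lam * ‖δ‖ ^ 2) s := by
    intro s
    exact ((hnd s).sub ((hasDerivAt_id s).const_mul (lam * ‖δ‖ ^ 2))).congr_deriv (by simp)
  have hφanti : AntitoneOn (fun s => n s - lam * ‖δ‖ ^ 2 * s) (Set.Icc 0 1) := by
    apply antitoneOn_of_deriv_nonpos (convex_Icc 0 1)
    · exact fun s _ => (hφd s).continuousAt.continuousWithinAt
    · exact fun s _ => ((hφd s).differentiableAt).differentiableWithinAt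
    · intro s hs
      rw [interior_Icc] at hs
      rw [(hφd s).deriv]
      have := hqb s ⟨le_of_lt hs.1, le_of_lt hs.2⟩
      linarith
  have hψd : ∀ s : ℝ, HasDerivAt
      (fun s => W (m + s • δ) - W m - s * n 0 - lam / 2 * ‖δ‖ ^ 2 * s ^ 2)
      (n s - n 0 - lam * ‖δ‖ ^ 2 * s) s := by
    intro s
    have h1 : HasDerivAt (fun s : ℝ => lam / 2 * ‖δ‖ ^ 2 * s ^ 2) (lam * ‖δ‖ ^ 2 * s) s := by
      have := ((hasDerivAt_pow 2 s).const_mul (lam / 2 * ‖δ‖ ^ 2))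
      exact this.congr_deriv (by rw [show (2:ℕ) - 1 = 1 from rfl]; push_cast; ring)
    have h2 : HasDerivAt (fun s : ℝ => s * n 0) (n 0) s := by
      simpa using (hasDerivAt_id s).mul_const (n 0)
    exact (((hg s).sub_const (W m)).sub h2).sub h1
  have hψanti : AntitoneOn
      (fun s => W (m + s • δ) - W m - s * n 0 - lam / 2 * ‖δ‖ ^ 2 * s ^ 2) (Set.Icc 0 1) := by
    apply antitoneOn_of_deriv_nonpos (convex_Icc 0 1)
    · exact fun s _ => (hψd s).continuousAt.continuousWithinAt
    · exact fun s _ => ((hψd s).differentiableAt).differentiableWithinAt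
    · intro s hs
      rw [interior_Icc] at hs
      rw [(hψd s).deriv]
      have h0 : (0:ℝ) ∈ Set.Icc (0:ℝ) 1 := by norm_num
      have hsIcc : s ∈ Set.Icc (0:ℝ) 1 := ⟨le_of_lt hs.1, le_of_lt hs.2⟩
      have := hφanti h0 hsIcc (le_of_lt hs.1)
      simp only [mul_zero, sub_zero] at this
      linarith
  have key := hψanti (by norm_num : (0:ℝ) ∈ Set.Icc (0:ℝ) 1)
    (by norm_num : (1:ℝ) ∈ Set.Icc (0:ℝ) 1) zero_le_one
  simp only [zero_smul, add_zero, one_smul, zero_mul, one_mul, one_pow, zero_pow, mul_zero,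
    sub_zero, sub_self] at key
  have : n 0 = fderiv ℝ W m δ := by simp [hn, hF]
  rw [this] at key
  linarith

theorem stmt_15 {d : ℕ} {𝒳 : Type*} [MeasurableSpace 𝒳]
    (ν : Measure 𝒳) [SigmaFinite ν]
    (h : 𝒳 → ℝ) (hh_nonneg : ∀ x, 0 ≤ h x) (hh_meas : Measurable h)
    (T : 𝒳 → EuclideanSpace ℝ (Fin d)) (hT_meas : Measurable T)
    (W : EuclideanSpace ℝ (Fin d) → ℝ) (hW : ContDiff ℝ 2 W)
    (E : EuclideanSpace ℝ (Fin d) → 𝒳 → ℝ)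
    (hE : ∀ θ x, E θ x = h x * Real.exp ((inner ℝ θ (T x) : ℝ) - W θ))
    (Θ : Set (EuclideanSpace ℝ (Fin d))) (hΘ : Convex ℝ Θ)
    (hnorm : ∀ θ ∈ Θ, ∫ x, E θ x ∂ν = 1)
    (P : EuclideanSpace ℝ (Fin d) → Measure 𝒳)
    (hP : ∀ θ, P θ = ν.withDensity (fun x => ENNReal.ofReal (E θ x)))
    (L lam β : ℝ) (hL : 0 < L) (hlam : 0 < lam) (hβ : 0 < β)
    (hgradL : ∀ θ ∈ Θ, ‖gradient W θ‖ ≤ L)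
    (hhess : ∀ θ ∈ Θ, ∀ v : EuclideanSpace ℝ (Fin d),
      iteratedFDeriv ℝ 2 W θ ![v, v] ≤ lam * ‖v‖ ^ 2)
    (hgrad : ∀ θ ∈ Θ, gradient W θ = ∫ x, T x ∂(P θ))
    (θ₁ θ₂ θs : EuclideanSpace ℝ (Fin d))
    (hθ₁ : θ₁ ∈ Θ) (hθ₂ : θ₂ ∈ Θ) (hθs : θs ∈ Θ)
    (m : EuclideanSpace ℝ (Fin d)) (hm : m = (1 / 2 : ℝ) • (θ₁ + θ₂))
    (hball : Metric.ball m (1 / (2 * β)) ⊆ Θ)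
    (hclose : ‖θ₁ - θs‖ < 1 / (2 * β))
    (t : ℝ) (ht : 0 < t) :
    P θs {x | E θ₁ x < t * E θ₂ x} ≤
      ENNReal.ofReal (Real.sqrt t *
        Real.exp (2 * L * ‖θ₁ - θs‖ + (lam / 2) * ‖θ₁ - θs‖ ^ 2 -
          ((W θ₁ + W θ₂) / 2 - W m))) := by
  set δ : EuclideanSpace ℝ (Fin d) := θs - θ₁ with hδdef
  have hnormδ : ‖θ₁ - θs‖ = ‖δ‖ := by rw [hδdef, norm_sub_rev]
  have hδ : ‖δ‖ < 1 / (2 * β) := by rw [← hnormδ]; exact hclose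
  set p : EuclideanSpace ℝ (Fin d) := m + δ with hpdef
  -- membership of the segment from m to p in Θ
  have hmemΘ : ∀ s : ℝ, s ∈ Set.Icc (0:ℝ) 1 → m + s • δ ∈ Θ := by
    intro s hs
    apply hball
    rw [Metric.mem_ball, dist_eq_norm]
    have h1 : m + s • δ - m = s • δ := by abel
    rw [h1, norm_smul]
    refine lt_of_le_of_lt ?_ hδ
    calc ‖s‖ * ‖δ‖ ≤ 1 * ‖δ‖ := by
          apply mul_le_mul_of_nonneg_right _ (norm_nonneg _)
          rw [Real.norm_eq_abs, abs_le]
          exact ⟨by linarith [hs.1], hs.2⟩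
      _ = ‖δ‖ := one_mul _
  have hmΘ : m ∈ Θ := by simpa using hmemΘ 0 (by norm_num)
  have hpΘ : p ∈ Θ := by
    have := hmemΘ 1 (by norm_num)
    simpa [hpdef] using this
  -- bound on the fderiv operator norm
  have hfd : ∀ θ ∈ Θ, ‖fderiv ℝ W θ‖ ≤ L := by
    intro θ hθ
    have h1 := hgradL θ hθ
    rw [show gradient W θ = (InnerProductSpace.toDual ℝ _).symm (fderiv ℝ W θ) from rfl,
      LinearIsometryEquiv.norm_map] at h1
    exact h1
  -- Lipschitz bound
  have hLip : |W θ₁ - W θs| ≤ L * ‖δ‖ := by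
    have := Convex.norm_image_sub_le_of_norm_fderiv_le
      (fun x _ => (hW.differentiable (by norm_num)).differentiableAt)
      hfd hΘ hθs hθ₁
    rw [Real.norm_eq_abs] at this
    calc |W θ₁ - W θs| ≤ L * ‖θ₁ - θs‖ := this
      _ = L * ‖δ‖ := by rw [hnormδ]
  -- Taylor bound
  have hTay : W p ≤ W m + fderiv ℝ W m δ + lam / 2 * ‖δ‖ ^ 2 :=
    taylor_aux W hW lam m δ (fun s hs => hhess _ (hmemΘ s hs) δ)
  have hfm : fderiv ℝ W m δ ≤ L * ‖δ‖ := by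
    calc fderiv ℝ W m δ ≤ |fderiv ℝ W m δ| := le_abs_self _
      _ ≤ ‖fderiv ℝ W m‖ * ‖δ‖ := (fderiv ℝ W m).le_opNorm δ
      _ ≤ L * ‖δ‖ := mul_le_mul_of_nonneg_right (hfd m hmΘ) (norm_nonneg _)
  set c : ℝ := (W θ₂ - W θ₁) / 2 + W θs with hcdef
  have hexp : W p - c ≤ 2 * L * ‖δ‖ + lam / 2 * ‖δ‖ ^ 2 - ((W θ₁ + W θ₂) / 2 - W m) := by
    have h1 : W θ₁ - W θs ≤ L * ‖δ‖ := le_trans (le_abs_self _) hLip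
    rw [hcdef]
    linarith
  -- measurability
  have hEmeas : ∀ θ, Measurable (E θ) := by
    intro θ
    have : E θ = fun x => h x * Real.exp ((inner ℝ θ (T x) : ℝ) - W θ) := funext (hE θ)
    rw [this]
    have hc : Continuous fun y : EuclideanSpace ℝ (Fin d) => (inner ℝ θ y : ℝ) :=
      Continuous.inner continuous_const continuous_id
    exact hh_meas.mul ((Real.continuous_exp.measurable).comp
      ((hc.measurable.comp hT_meas).sub measurable_const))
  set A : Set 𝒳 := {x | E θ₁ x < t * E θ₂ x} with hAdef
  have hA : MeasurableSet A := measurableSet_lt (hEmeas θ₁) ((hEmeas θ₂).const_mul t)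
  -- nonnegativity of densities
  have hEnn : ∀ θ x, 0 ≤ E θ x := by
    intro θ x
    rw [hE]
    exact mul_nonneg (hh_nonneg x) (Real.exp_pos _).le
  -- pointwise bound on A
  set K : ℝ := Real.sqrt t * Real.exp (W p - c) with hKdef
  have hKnn : 0 ≤ K := mul_nonneg (Real.sqrt_nonneg _) (Real.exp_pos _).le
  have hpt : ∀ x ∈ A, ENNReal.ofReal (E θs x) ≤ ENNReal.ofReal (K * E p x) := by
    intro x hx
    apply ENNReal.ofReal_le_ofReal
    have hxlt : E θ₁ x < t * E θ₂ x := hx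
    have hhpos : 0 < h x := by
      rcases lt_or_eq_of_le (hh_nonneg x) with h1 | h1
      · exact h1
      · exfalso
        rw [hE, hE, ← h1] at hxlt
        simp at hxlt
    set a : ℝ := (inner ℝ θ₁ (T x) : ℝ) - W θ₁ with hadef
    set b : ℝ := (inner ℝ θ₂ (T x) : ℝ) - W θ₂ with hbdef
    have hxlt' : Real.exp a < t * Real.exp b := by
      rw [hE, hE, ← hadef, ← hbdef] at hxlt
      refine (mul_lt_mul_iff_right₀ hhpos).mp ?_
      rw [show h x * (t * Real.exp b) = t * (h x * Real.exp b) by ring]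
      exact hxlt
    have hlt2 : Real.exp ((a - b) / 2) < Real.sqrt t := by
      rw [show Real.sqrt t = Real.sqrt t from rfl]
      have h2 : Real.exp ((a - b) / 2) ^ 2 < t := by
        have : Real.exp ((a - b) / 2) ^ 2 = Real.exp (a - b) := by
          rw [← Real.exp_nat_mul]
          norm_num
          ring_nf
        rw [this, Real.exp_sub, div_lt_iff₀ (Real.exp_pos b)]
        linarith
      exact (Real.lt_sqrt (Real.exp_pos _).le).mpr h2
    have hone : 1 < Real.sqrt t * Real.exp ((b - a) / 2) := by
      rw [show (b - a) / 2 = -((a - b) / 2) by ring, Real.exp_neg, ← div_eq_mul_inv]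
      exact (one_lt_div (Real.exp_pos _)).mpr hlt2
    -- inner ℝ product identity
    have hinner : (inner ℝ p (T x) : ℝ) =
        (inner ℝ θs (T x) : ℝ) + ((inner ℝ θ₂ (T x) : ℝ) - (inner ℝ θ₁ (T x) : ℝ)) / 2 := by
      rw [hpdef, hδdef, hm]
      rw [inner_add_left, inner_sub_left, real_inner_smul_left, inner_add_left]
      ring
    have hEp : E p x = Real.exp ((inner ℝ θs (T x) : ℝ) - W θs) * Real.exp ((b - a) / 2) *
        Real.exp (c - W p) * h x := by
      rw [hE, show (inner ℝ p (T x) : ℝ) - W p =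
        ((inner ℝ θs (T x) : ℝ) - W θs) + (b - a) / 2 + (c - W p) by
          rw [hinner, hbdef, hadef, hcdef]; ring]
      rw [Real.exp_add, Real.exp_add]
      ring
    have hcancel : Real.exp (W p - c) * Real.exp (c - W p) = 1 := by
      rw [← Real.exp_add]; simp
    have hKE : K * E p x = h x * Real.exp ((inner ℝ θs (T x) : ℝ) - W θs) *
        (Real.sqrt t * Real.exp ((b - a) / 2)) := by
      calc K * E p x = h x * Real.exp ((inner ℝ θs (T x) : ℝ) - W θs) *
            (Real.sqrt t * Real.exp ((b - a) / 2)) * (Real.exp (W p - c) * Real.exp (c - W p)) := by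
            rw [hKdef, hEp]; ring
        _ = _ := by rw [hcancel, mul_one]
    rw [hE θs x, hKE]
    have hnn : 0 ≤ h x * Real.exp ((inner ℝ θs (T x) : ℝ) - W θs) :=
      mul_nonneg hhpos.le (Real.exp_pos _).le
    nlinarith [hone, hnn]
  -- the integral of E p is 1
  have hInt : Integrable (E p) ν := by
    by_contra hni
    have := hnorm p hpΘ
    rw [integral_undef hni] at this
    norm_num at this
  have hlint : ∫⁻ x, ENNReal.ofReal (E p x) ∂ν = 1 := by
    rw [← ofReal_integral_eq_lintegral_ofReal hInt (Filter.Eventually.of_forall (hEnn p))]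
    rw [hnorm p hpΘ]
    simp
  have hcalc : P θs A ≤ ENNReal.ofReal K := by
    calc P θs A = ∫⁻ x in A, ENNReal.ofReal (E θs x) ∂ν := by
          rw [hP, withDensity_apply _ hA]
      _ ≤ ∫⁻ x in A, ENNReal.ofReal (K * E p x) ∂ν :=
          setLIntegral_mono (((hEmeas p).const_mul K).ennreal_ofReal) hpt
      _ ≤ ∫⁻ x, ENNReal.ofReal (K * E p x) ∂ν := setLIntegral_le_lintegral _ _
      _ = ∫⁻ x, ENNReal.ofReal K * ENNReal.ofReal (E p x) ∂ν := by
          congr 1; funext x; rw [ENNReal.ofReal_mul hKnn]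
      _ = ENNReal.ofReal K * ∫⁻ x, ENNReal.ofReal (E p x) ∂ν :=
          lintegral_const_mul' _ _ ENNReal.ofReal_ne_top
      _ = ENNReal.ofReal K := by rw [hlint, mul_one]
  refine le_trans hcalc (ENNReal.ofReal_le_ofReal ?_)
  rw [hKdef]
  apply mul_le_mul_of_nonneg_left _ (Real.sqrt_nonneg t)
  rw [Real.exp_le_exp, hnormδ]
  exact hexp
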